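/- arXiv:0902.0043 — 2 statements merged into one kernel-verified Lean document; each statement's English description precedes it below -/
import Mathlib

section
/- The tautology ∀P:o. P ⇒ P (encoded as Π^o(λP:o. ¬P ∨ P)) is 3-cut-strong in the sequent calculus G_β: if Δ * C is derivable in n steps and Δ * ¬C is derivable in m steps (for β-normal closed C of type o), then Δ * ¬(∀P:o. ¬P ∨ P) is derivable in at most n+m+3 steps. -/
namespace CutSim

inductive Ty : Type
  | o : Ty
  | i : Ty
  | arr : Ty → Ty → Ty
  deriving DecidableEq

inductive Tm : Type
  | var : ℕ → Tm
  | param : ℕ → Ty → Tm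
  | cnot : Tm
  | cor : Tm
  | cpi : Ty → Tm
  | app : Tm → Tm → Tm
  | lam : Ty → Tm → Tm
  deriving DecidableEq

open Ty Tm

/-- negation ¬A -/
def NEG (A : Tm) : Tm := .app .cnot A
/-- disjunction A ∨ B -/
def OR (A B : Tm) : Tm := .app (.app .cor A) B
/-- Π^α F -/
def PI (a : Ty) (F : Tm) : Tm := .app (.cpi a) F
/-- implication A ⇒ B := ¬A ∨ B -/
def IMP (A B : Tm) : Tm := OR (NEG A) B
/-- equivalence A ⟺ B := ¬(¬(A⇒B) ∨ ¬(B⇒A)) -/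
def IFF (A B : Tm) : Tm := NEG (OR (NEG (IMP A B)) (NEG (IMP B A)))

/-- de Bruijn shifting: add d to all variables ≥ c -/
def shift (d c : ℕ) : Tm → Tm
  | .var n => if n < c then .var n else .var (n + d)
  | .param k a => .param k a
  | .cnot => .cnot
  | .cor => .cor
  | .cpi a => .cpi a
  | .app f x => .app (shift d c f) (shift d c x)
  | .lam a b => .lam a (shift d (c+1) b)

/-- capture-avoiding substitution of s for variable k -/
def subst (k : ℕ) (s : Tm) : Tm → Tm
  | .var n => if n = k then shift k 0 s else if k < n then .var (n-1) else .var n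
  | .param m a => .param m a
  | .cnot => .cnot
  | .cor => .cor
  | .cpi a => .cpi a
  | .app f x => .app (subst k s f) (subst k s x)
  | .lam a b => .lam a (subst (k+1) s b)

/-- simple typing relation -/
inductive HasTy : List Ty → Tm → Ty → Prop
  | var {Γ n a} : Γ[n]? = some a → HasTy Γ (.var n) a
  | param {Γ k a} : HasTy Γ (.param k a) a
  | cnot {Γ} : HasTy Γ .cnot (.arr .o .o)
  | cor {Γ} : HasTy Γ .cor (.arr .o (.arr .o .o))
  | cpi {Γ a} : HasTy Γ (.cpi a) (.arr (.arr a .o) .o)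
  | app {Γ f x a b} : HasTy Γ f (.arr a b) → HasTy Γ x a → HasTy Γ (.app f x) b
  | lam {Γ a B b} : HasTy (a :: Γ) B b → HasTy Γ (.lam a B) (.arr a b)

/-- a sentence is a closed formula of type o -/
def Sent (A : Tm) : Prop := HasTy [] A .o

/-- one-step β-reduction -/
inductive Beta : Tm → Tm → Prop
  | beta {a B s} : Beta (.app (.lam a B) s) (subst 0 s B)
  | appl {f f' x} : Beta f f' → Beta (.app f x) (.app f' x)
  | appr {f x x'} : Beta x x' → Beta (.app f x) (.app f x')
  | lam {a b b'} : Beta b b' → Beta (.lam a b) (.lam a b')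

def BetaStar : Tm → Tm → Prop := Relation.ReflTransGen Beta
def IsBetaNormal (A : Tm) : Prop := ∀ B, ¬ Beta A B
/-- B is the β-normal form of A -/
def BetaNF (A B : Tm) : Prop := BetaStar A B ∧ IsBetaNormal B
/-- β-equality (via confluence: common reduct) -/
def BetaEq (A B : Tm) : Prop := ∃ C, BetaStar A C ∧ BetaStar B C

def headIsLogical : Tm → Prop
  | .app f _ => headIsLogical f
  | .cnot => True
  | .cor => True
  | .cpi _ => True
  | _ => False

/-- atomic formula: β-normal, head not a logical constant -/
def Atomic (A : Tm) : Prop := IsBetaNormal A ∧ ¬ headIsLogical A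

def OccursParam (k : ℕ) (a : Ty) : Tm → Prop
  | .param m b => k = m ∧ a = b
  | .app f x => OccursParam k a f ∨ OccursParam k a x
  | .lam _ b => OccursParam k a b
  | _ => False

/-- β-normal sentence -/
def BNSent (C : Tm) : Prop := Sent C ∧ IsBetaNormal C

/-- The sequent calculus G_β, with the number of proof steps as index. -/
inductive Der : Finset Tm → ℕ → Prop
  | init {Δ : Finset Tm} {A} : Atomic A → Der (insert A (insert (NEG A) Δ)) 1
  | negI {Δ : Finset Tm} {A n} : Der (insert A Δ) n → Der (insert (NEG (NEG A)) Δ) (n+1)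
  | orL {Δ : Finset Tm} {A B n m} : Der (insert (NEG A) Δ) n → Der (insert (NEG B) Δ) m →
      Der (insert (NEG (OR A B)) Δ) (n+m+1)
  | orR {Δ : Finset Tm} {A B n} : Der (insert A (insert B Δ)) n → Der (insert (OR A B) Δ) (n+1)
  | piL {Δ : Finset Tm} {a F C D n} : HasTy [] C a → BetaNF (.app F C) D →
      Der (insert (NEG D) Δ) n → Der (insert (NEG (PI a F)) Δ) (n+1)
  | piR {Δ : Finset Tm} {a F c D n} : BetaNF (.app F (.param c a)) D →
      (∀ B ∈ insert (PI a F) Δ, ¬ OccursParam c a B) →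
      Der (insert D Δ) n → Der (insert (PI a F) Δ) (n+1)

/-- A is k-cut-strong for G_β -/
def CutStrong (k : ℕ) (A : Tm) : Prop :=
  ∀ (Δ : Finset Tm) (C : Tm) (n m : ℕ), BNSent C →
    Der (insert C Δ) n → Der (insert (NEG C) Δ) m →
    ∃ s ≤ n + m + k, Der (insert (NEG A) Δ) s

/-- Leibniz equality M ≐^α N := Π^{α→o}(λP. ¬(P M) ∨ (P N)) -/
def leib (a : Ty) (M N : Tm) : Tm :=
  PI (.arr a .o) (.lam (.arr a .o)
    (OR (NEG (.app (.var 0) (shift 1 0 M))) (.app (.var 0) (shift 1 0 N))))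

lemma shift_zero (t : Tm) : ∀ c, shift 0 c t = t := by
  induction t <;> intro c <;> simp_all [shift]

lemma normal_or_neg (C : Tm) (h : IsBetaNormal C) : IsBetaNormal (OR (NEG C) C) := by
  intro B hB
  cases hB with
  | appr h5 => exact h _ h5
  | appl h1 =>
    cases h1 with
    | appl h2 => cases h2
    | appr h3 =>
      cases h3 with
      | appl h4 => cases h4
      | appr h5 => exact h _ h5

/-- ∀P:o. P ⇒ P is 3-cut-strong in G_β -/
theorem stmt1 : CutStrong 3 (PI .o (.lam .o (OR (NEG (.var 0)) (.var 0)))) := by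
  intro Δ C n m hC hd1 hd2
  refine ⟨n+m+3, le_refl _, ?_⟩
  have hnf : BetaNF (.app (.lam .o (OR (NEG (.var 0)) (.var 0))) C) (OR (NEG C) C) := by
    constructor
    · have hs : subst 0 C (OR (NEG (.var 0)) (.var 0)) = OR (NEG C) C := by
        simp [OR, NEG, subst, shift_zero]
      exact Relation.ReflTransGen.single (hs ▸ Beta.beta)
    · exact normal_or_neg C hC.2
  have d1 : Der (insert (NEG (NEG C)) Δ) (n+1) := Der.negI hd1
  have d2 := Der.orL d1 hd2
  have d3 := Der.piL hC.1 hnf d2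
  have he : n+1+m+1+1 = n+m+3 := by ring
  exact he ▸ d3

end CutSim
end

section
/- Corollary (cut-elimination with linear blow-up for cut-strong sequents): if Δ is a sequent containing ¬A for a k-cut-strong formula A, then every derivation of Δ in G_β plus unrestricted cut with d proof steps and n cut applications yields a cut-free derivation of Δ in G_β with at most d + n·k proof steps. -/
namespace CutSim

open Ty Tm

/-- G_β + unrestricted cut; indices: number of proof steps, number of cut applications -/
inductive DerC : Finset Tm → ℕ → ℕ → Prop
  | init {Δ : Finset Tm} {A} : Atomic A → DerC (insert A (insert (NEG A) Δ)) 1 0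
  | negI {Δ : Finset Tm} {A n p} : DerC (insert A Δ) n p →
      DerC (insert (NEG (NEG A)) Δ) (n+1) p
  | orL {Δ : Finset Tm} {A B n m p q} : DerC (insert (NEG A) Δ) n p →
      DerC (insert (NEG B) Δ) m q → DerC (insert (NEG (OR A B)) Δ) (n+m+1) (p+q)
  | orR {Δ : Finset Tm} {A B n p} : DerC (insert A (insert B Δ)) n p →
      DerC (insert (OR A B) Δ) (n+1) p
  | piL {Δ : Finset Tm} {a F C D n p} : HasTy [] C a → BetaNF (.app F C) D →
      DerC (insert (NEG D) Δ) n p → DerC (insert (NEG (PI a F)) Δ) (n+1) p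
  | piR {Δ : Finset Tm} {a F c D n p} : BetaNF (.app F (.param c a)) D →
      (∀ B ∈ insert (PI a F) Δ, ¬ OccursParam c a B) →
      DerC (insert D Δ) n p → DerC (insert (PI a F) Δ) (n+1) p
  | cut {Δ : Finset Tm} {C n m p q} : BNSent C → DerC (insert C Δ) n p →
      DerC (insert (NEG C) Δ) m q → DerC Δ (n+m+1) (p+q+1)

/-- G_β + cut_A; indices: number of proof steps, number of cut_A applications -/
inductive DerCA (A : Tm) : Finset Tm → ℕ → ℕ → Prop
  | init {Δ : Finset Tm} {B} : Atomic B → DerCA A (insert B (insert (NEG B) Δ)) 1 0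
  | negI {Δ : Finset Tm} {B n p} : DerCA A (insert B Δ) n p →
      DerCA A (insert (NEG (NEG B)) Δ) (n+1) p
  | orL {Δ : Finset Tm} {B C n m p q} : DerCA A (insert (NEG B) Δ) n p →
      DerCA A (insert (NEG C) Δ) m q → DerCA A (insert (NEG (OR B C)) Δ) (n+m+1) (p+q)
  | orR {Δ : Finset Tm} {B C n p} : DerCA A (insert B (insert C Δ)) n p →
      DerCA A (insert (OR B C) Δ) (n+1) p
  | piL {Δ : Finset Tm} {a F C D n p} : HasTy [] C a → BetaNF (.app F C) D →
      DerCA A (insert (NEG D) Δ) n p → DerCA A (insert (NEG (PI a F)) Δ) (n+1) p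
  | piR {Δ : Finset Tm} {a F c D n p} : BetaNF (.app F (.param c a)) D →
      (∀ B ∈ insert (PI a F) Δ, ¬ OccursParam c a B) →
      DerCA A (insert D Δ) n p → DerCA A (insert (PI a F) Δ) (n+1) p
  | cutA {Δ : Finset Tm} {C n m p q} : BNSent C → DerCA A (insert C Δ) n p →
      DerCA A (insert (NEG C) Δ) m q → DerCA A (insert (NEG A) Δ) (n+m+1) (p+q+1)


/-! ### Auxiliary material for stmt12 -/

/-- swap of parameter indices -/
def pswap (c c' k : ℕ) : ℕ := if k = c then c' else if k = c' then c else k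

lemma pswap_pswap (c c' k : ℕ) : pswap c c' (pswap c c' k) = k := by
  simp only [pswap]; split_ifs <;> omega

lemma pswap_left (c c' : ℕ) : pswap c c' c = c' := by simp [pswap]

/-- swap parameters c and c' of type a -/
def tswap (c c' : ℕ) (a : Ty) : Tm → Tm
  | .var n => .var n
  | .param m b => .param (if b = a then pswap c c' m else m) b
  | .cnot => .cnot
  | .cor => .cor
  | .cpi b => .cpi b
  | .app f x => .app (tswap c c' a f) (tswap c c' a x)
  | .lam b t => .lam b (tswap c c' a t)

variable {c c' : ℕ} {a : Ty}

lemma tswap_tswap (t : Tm) : tswap c c' a (tswap c c' a t) = t := by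
  induction t with
  | param m b => by_cases hb : b = a <;> simp [tswap, hb, pswap_pswap]
  | app f x ihf ihx => simp [tswap, ihf, ihx]
  | lam b t ih => simp [tswap, ih]
  | _ => rfl

lemma tswap_shift (d cc : ℕ) (t : Tm) :
    tswap c c' a (shift d cc t) = shift d cc (tswap c c' a t) := by
  induction t generalizing cc with
  | var n => by_cases h : n < cc <;> simp [shift, tswap, h]
  | app f x ihf ihx => simp [shift, tswap, ihf, ihx]
  | lam b t ih => simp [shift, tswap, ih]
  | _ => rfl

lemma tswap_subst (kk : ℕ) (s t : Tm) :
    tswap c c' a (subst kk s t) = subst kk (tswap c c' a s) (tswap c c' a t) := by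
  induction t generalizing kk with
  | var n =>
      rcases eq_or_ne n kk with h | h
      · simp [subst, tswap, h, tswap_shift]
      · by_cases h2 : kk < n <;> simp [subst, tswap, h, h2]
  | app f x ihf ihx => simp [subst, tswap, ihf, ihx]
  | lam b t ih => simp [subst, tswap, ih]
  | _ => rfl

lemma hasTy_tswap {Γ t τ} (h : HasTy Γ t τ) : HasTy Γ (tswap c c' a t) τ := by
  induction h with
  | var h => exact HasTy.var h
  | param => exact HasTy.param
  | cnot => exact HasTy.cnot
  | cor => exact HasTy.cor
  | cpi => exact HasTy.cpi
  | app _ _ ihf ihx => exact HasTy.app ihf ihx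
  | lam _ ih => exact HasTy.lam ih

lemma beta_tswap {t t'} (h : Beta t t') : Beta (tswap c c' a t) (tswap c c' a t') := by
  induction h with
  | @beta b B s => rw [tswap_subst]; exact Beta.beta
  | appl _ ih => exact Beta.appl ih
  | appr _ ih => exact Beta.appr ih
  | lam _ ih => exact Beta.lam ih

lemma betaStar_tswap {t t'} (h : BetaStar t t') :
    BetaStar (tswap c c' a t) (tswap c c' a t') := by
  induction h with
  | refl => exact Relation.ReflTransGen.refl
  | tail _ hb ih => exact Relation.ReflTransGen.tail ih (beta_tswap hb)

lemma isBetaNormal_tswap {t} (h : IsBetaNormal t) : IsBetaNormal (tswap c c' a t) := by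
  intro B hB
  have := beta_tswap (c := c) (c' := c') (a := a) hB
  rw [tswap_tswap] at this
  exact h _ this

lemma betaNF_tswap {t t'} (h : BetaNF t t') :
    BetaNF (tswap c c' a t) (tswap c c' a t') :=
  ⟨betaStar_tswap h.1, isBetaNormal_tswap h.2⟩

lemma headIsLogical_tswap (t : Tm) : headIsLogical (tswap c c' a t) ↔ headIsLogical t := by
  induction t with
  | app f x ihf _ => simpa [tswap, headIsLogical] using ihf
  | param m b => by_cases hb : b = a <;> simp [tswap, hb, headIsLogical]
  | _ => simp [tswap, headIsLogical]

lemma atomic_tswap {t} (h : Atomic t) : Atomic (tswap c c' a t) :=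
  ⟨isBetaNormal_tswap h.1, fun hl => h.2 ((headIsLogical_tswap t).mp hl)⟩

lemma occurs_tswap (m : ℕ) (b : Ty) (t : Tm) :
    OccursParam m b (tswap c c' a t) ↔
      OccursParam (if b = a then pswap c c' m else m) b t := by
  induction t with
  | param m' b' =>
      show (m = (if b' = a then pswap c c' m' else m') ∧ b = b') ↔
        ((if b = a then pswap c c' m else m) = m' ∧ b = b')
      by_cases hbb : b = b'
      · subst hbb
        by_cases hb : b = a
        · simp only [if_pos hb]
          constructor
          · rintro ⟨h1, h2⟩; exact ⟨by rw [h1, pswap_pswap], h2⟩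
          · rintro ⟨h1, h2⟩; exact ⟨by rw [← h1, pswap_pswap], h2⟩
        · simp [hb]
      · simp [hbb]
  | app f x ihf ihx => simp [tswap, OccursParam, ihf, ihx]
  | lam b' t ih => simpa [tswap, OccursParam] using ih
  | var n => simp [tswap, OccursParam]
  | cnot => simp [tswap, OccursParam]
  | cor => simp [tswap, OccursParam]
  | cpi b' => simp [tswap, OccursParam]

lemma tswap_fix {t : Tm} (h1 : ¬ OccursParam c a t) (h2 : ¬ OccursParam c' a t) :
    tswap c c' a t = t := by
  induction t with
  | param m b =>
      by_cases hb : b = a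
      · subst hb
        simp only [OccursParam] at h1 h2
        have hc : m ≠ c := fun h => h1 ⟨h.symm, trivial⟩
        have hc' : m ≠ c' := fun h => h2 ⟨h.symm, trivial⟩
        simp [tswap, pswap, hc, hc']
      · simp [tswap, hb]
  | app f x ihf ihx =>
      simp only [OccursParam, not_or] at h1 h2
      simp [tswap, ihf h1.1 h2.1, ihx h1.2 h2.2]
  | lam b t ih =>
      simp only [OccursParam] at h1 h2
      simp [tswap, ih h1 h2]
  | _ => rfl

lemma tswap_NEG (t : Tm) : tswap c c' a (NEG t) = NEG (tswap c c' a t) := rfl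
lemma tswap_OR (s t : Tm) :
    tswap c c' a (OR s t) = OR (tswap c c' a s) (tswap c c' a t) := rfl
lemma tswap_PI (b : Ty) (t : Tm) : tswap c c' a (PI b t) = PI b (tswap c c' a t) := rfl

lemma bnsent_tswap {C} (h : BNSent C) : BNSent (tswap c c' a C) :=
  ⟨hasTy_tswap h.1, isBetaNormal_tswap h.2⟩

lemma derC_tswap {Δ : Finset Tm} {n p : ℕ} (h : DerC Δ n p) :
    DerC (Δ.image (tswap c c' a)) n p := by
  induction h with
  | @init Δ B hAt =>
      rw [Finset.image_insert, Finset.image_insert, tswap_NEG]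
      exact DerC.init (atomic_tswap hAt)
  | @negI Δ B n p _ ih =>
      rw [Finset.image_insert, tswap_NEG, tswap_NEG]
      exact DerC.negI (by rwa [Finset.image_insert] at ih)
  | @orL Δ B C n m p q _ _ ih1 ih2 =>
      rw [Finset.image_insert, tswap_NEG, tswap_OR]
      exact DerC.orL (by rwa [Finset.image_insert, tswap_NEG] at ih1)
        (by rwa [Finset.image_insert, tswap_NEG] at ih2)
  | @orR Δ B C n p _ ih =>
      rw [Finset.image_insert, tswap_OR]
      exact DerC.orR (by rwa [Finset.image_insert, Finset.image_insert] at ih)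
  | @piL Δ a0 F C D n p hty hnf _ ih =>
      rw [Finset.image_insert, tswap_NEG, tswap_PI]
      have hnf' := betaNF_tswap (c := c) (c' := c') (a := a) hnf
      exact DerC.piL (hasTy_tswap hty) hnf'
        (by rwa [Finset.image_insert, tswap_NEG] at ih)
  | @piR Δ a0 F c0 D n p hnf hside _ ih =>
      rw [Finset.image_insert, tswap_PI]
      have hnf' := betaNF_tswap (c := c) (c' := c') (a := a) hnf
      have heq : tswap c c' a (Tm.app F (Tm.param c0 a0)) =
          Tm.app (tswap c c' a F) (Tm.param (if a0 = a then pswap c c' c0 else c0) a0) := by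
        simp [tswap]
      rw [heq] at hnf'
      refine DerC.piR hnf' ?_ (by rwa [Finset.image_insert] at ih)
      intro B hB
      rw [← tswap_PI, ← Finset.image_insert] at hB
      obtain ⟨B0, hB0, rfl⟩ := Finset.mem_image.mp hB
      rw [occurs_tswap]
      have : (if a0 = a then pswap c c' (if a0 = a then pswap c c' c0 else c0)
          else (if a0 = a then pswap c c' c0 else c0)) = c0 := by
        by_cases h0 : a0 = a <;> simp [h0, pswap_pswap]
      rw [this]
      exact hside B0 hB0
  | @cut Δ C n m p q hC _ _ ih1 ih2 =>
      have hC' := bnsent_tswap (c := c) (c' := c') (a := a) hC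
      exact DerC.cut hC' (by rwa [Finset.image_insert] at ih1)
        (by rwa [Finset.image_insert, tswap_NEG] at ih2)

/-- bound on parameter indices occurring in a term -/
def pbound : Tm → ℕ
  | .param m _ => m + 1
  | .app f x => max (pbound f) (pbound x)
  | .lam _ b => pbound b
  | _ => 0

lemma occurs_lt_pbound {m b t} (h : OccursParam m b t) : m < pbound t := by
  induction t with
  | param m' b' => obtain ⟨h1, -⟩ := h; simp [pbound]; omega
  | app f x ihf ihx =>
      rcases h with h | h
      · exact lt_of_lt_of_le (ihf h) (by simp [pbound])
      · exact lt_of_lt_of_le (ihx h) (by simp [pbound])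
  | lam b' t ih => exact ih h
  | var n => exact absurd h not_false
  | cnot => exact absurd h not_false
  | cor => exact absurd h not_false
  | cpi b' => exact absurd h not_false

lemma fresh_not_occurs {S : Finset Tm} {B : Tm} (hB : B ∈ S) (b : Ty) :
    ¬ OccursParam (S.sup pbound) b B := fun h =>
  absurd (Finset.le_sup hB) (not_le.mpr (occurs_lt_pbound h))

/-- cut-elimination with linear blow-up for cut-strong sequents -/
theorem stmt12 (k : ℕ) (A : Tm) (hA : CutStrong k A) (Δ : Finset Tm)
    (hmem : NEG A ∈ Δ) (d p : ℕ) (h : DerC Δ d p) :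
    ∃ s ≤ d + p * k, Der Δ s := by
  have key : ∀ d : ℕ, ∀ p (Δ : Finset Tm), DerC Δ d p →
      ∃ s ≤ d + p * k, Der (insert (NEG A) Δ) s := by
    intro d
    induction d using Nat.strong_induction_on with
    | _ d IH =>
    intro p Δ h
    cases h with
    | @init Δ' B hAt =>
        refine ⟨1, by omega, ?_⟩
        rw [Finset.insert_comm (NEG A) B, Finset.insert_comm (NEG A) (NEG B)]
        exact Der.init hAt
    | @negI Δ' B n p' hprem =>
        obtain ⟨s, hs, hd⟩ := IH n (by omega) p _ hprem
        refine ⟨s + 1, by omega, ?_⟩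
        rw [Finset.insert_comm]
        exact Der.negI (by rwa [Finset.insert_comm] at hd)
    | @orL Δ' B C n m p' q' h1 h2 =>
        obtain ⟨s1, hs1, hd1⟩ := IH n (by omega) p' _ h1
        obtain ⟨s2, hs2, hd2⟩ := IH m (by omega) q' _ h2
        have hmul : (p' + q') * k = p' * k + q' * k := Nat.add_mul _ _ _
        refine ⟨s1 + s2 + 1, by omega, ?_⟩
        rw [Finset.insert_comm]
        exact Der.orL (by rwa [Finset.insert_comm] at hd1)
          (by rwa [Finset.insert_comm] at hd2)
    | @orR Δ' B C n p' hprem =>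
        obtain ⟨s, hs, hd⟩ := IH n (by omega) p _ hprem
        refine ⟨s + 1, by omega, ?_⟩
        rw [Finset.insert_comm (NEG A) B, Finset.insert_comm (NEG A) C] at hd
        rw [Finset.insert_comm]
        exact Der.orR hd
    | @piL Δ' a0 F C D n p' hty hnf hprem =>
        obtain ⟨s, hs, hd⟩ := IH n (by omega) p _ hprem
        refine ⟨s + 1, by omega, ?_⟩
        rw [Finset.insert_comm]
        exact Der.piL hty hnf (by rwa [Finset.insert_comm] at hd)
    | @piR Δ' a0 F c0 D n p' hnf hside hprem =>
        set S : Finset Tm := insert (NEG A) (insert (PI a0 F) Δ') with hS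
        set c1 : ℕ := S.sup pbound with hc1
        have hfresh : ∀ B ∈ S, ¬ OccursParam c1 a0 B := fun B hB => fresh_not_occurs hB a0
        have hF0 : ¬ OccursParam c0 a0 F := by
          intro h
          exact hside (PI a0 F) (Finset.mem_insert_self _ _) (Or.inr h)
        have hF1 : ¬ OccursParam c1 a0 F := by
          intro h
          exact hfresh (PI a0 F)
            (Finset.mem_insert_of_mem (Finset.mem_insert_self _ _)) (Or.inr h)
        have himg : Δ'.image (tswap c0 c1 a0) = Δ' := by
          have : Δ'.image (tswap c0 c1 a0) = Δ'.image id := by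
            apply Finset.image_congr
            intro B hB
            exact tswap_fix
              (hside B (Finset.mem_insert_of_mem hB))
              (hfresh B (Finset.mem_insert_of_mem (Finset.mem_insert_of_mem hB)))
          rw [this, Finset.image_id]
        have hprem' : DerC (insert (tswap c0 c1 a0 D) Δ') n p := by
          have := derC_tswap (c := c0) (c' := c1) (a := a0) hprem
          rwa [Finset.image_insert, himg] at this
        have hnf' : BetaNF (.app F (.param c1 a0)) (tswap c0 c1 a0 D) := by
          have := betaNF_tswap (c := c0) (c' := c1) (a := a0) hnf
          have heq : tswap c0 c1 a0 (Tm.app F (Tm.param c0 a0)) =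
              Tm.app F (Tm.param c1 a0) := by
            show Tm.app (tswap c0 c1 a0 F) (Tm.param (if a0 = a0 then pswap c0 c1 c0 else c0) a0)
              = Tm.app F (Tm.param c1 a0)
            rw [if_pos rfl, pswap_left, tswap_fix hF0 hF1]
          rwa [heq] at this
        obtain ⟨s, hs, hd⟩ := IH n (by omega) p _ hprem'
        refine ⟨s + 1, by omega, ?_⟩
        rw [hS, Finset.insert_comm]
        refine Der.piR hnf' ?_ (by rwa [Finset.insert_comm] at hd)
        intro B hB
        apply hfresh
        rw [hS, Finset.insert_comm]
        exact hB
    | @cut Δ'' C n m p' q' hC h1 h2 =>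
        obtain ⟨s1, hs1, hd1⟩ := IH n (by omega) p' _ h1
        obtain ⟨s2, hs2, hd2⟩ := IH m (by omega) q' _ h2
        rw [Finset.insert_comm] at hd1 hd2
        obtain ⟨s, hsle, hds⟩ := hA (insert (NEG A) Δ) C s1 s2 hC hd1 hd2
        rw [Finset.insert_idem] at hds
        have hmul : (p' + q' + 1) * k = p' * k + q' * k + k := by ring
        exact ⟨s, by omega, hds⟩
  obtain ⟨s, hs, hd⟩ := key d p Δ h
  rw [Finset.insert_eq_self.mpr hmem] at hd
  exact ⟨s, hs, hd⟩

end CutSim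
end
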